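/- Let λ > 0 and let ∑_{k=0}^∞ x_k be a convergent series with non-negative terms such that λ·x_n ≥ ∑_{k=n+1}^∞ x_k for all n ≥ 0. Then for 0 < α ≤ 1 we have ∑_{k=0}^∞ x_k^α ≤ (1/((λ+1)^α − λ^α)) · (∑_{k=0}^∞ x_k)^α. -/

import Mathlib

open Filter

lemma key_majorize (α : ℝ) (hα0 : 0 < α) (hα1 : α ≤ 1) {x t s : ℝ}
    (hx : 0 ≤ x) (ht : 0 ≤ t) (hts : t ≤ s) :
    (x + s) ^ α + t ^ α ≤ (x + t) ^ α + s ^ α := by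
  have hcc : ConcaveOn ℝ (Set.Ici 0) fun u : ℝ ↦ u ^ α :=
    Real.concaveOn_rpow hα0.le hα1
  rcases eq_or_lt_of_le (by linarith : t ≤ x + s) with h | hD
  · have hx0 : x = 0 := by linarith
    have hst : s = t := by linarith
    simp [hx0, hst]
  · set D : ℝ := x + s - t with hDdef
    have hDpos : 0 < D := by simp only [hDdef]; linarith
    have hμ : 0 ≤ x / D := div_nonneg hx hDpos.le
    have hν : 0 ≤ (s - t) / D := div_nonneg (by linarith) hDpos.le
    have hab : x / D + (s - t) / D = 1 := by
      rw [← add_div]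
      have : x + (s - t) = D := by simp only [hDdef]; ring
      rw [this, div_self hDpos.ne']
    have h1 := hcc.2 (Set.mem_Ici.2 (by linarith : (0:ℝ) ≤ x + s))
      (Set.mem_Ici.2 ht) hμ hν hab
    have h2 := hcc.2 (Set.mem_Ici.2 (by linarith : (0:ℝ) ≤ x + s))
      (Set.mem_Ici.2 ht) hν hμ (by linarith)
    have e1 : (x / D) • (x + s) + ((s - t) / D) • t = x + t := by
      simp only [smul_eq_mul]; field_simp; ring
    have e2 : ((s - t) / D) • (x + s) + (x / D) • t = s := by
      simp only [smul_eq_mul]; field_simp; ring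
    rw [e1] at h1
    rw [e2] at h2
    simp only [smul_eq_mul] at h1 h2
    have hA : x / D * (x + s) ^ α + (s - t) / D * (x + s) ^ α = (x + s) ^ α := by
      rw [← add_mul, hab, one_mul]
    have hT : (s - t) / D * t ^ α + x / D * t ^ α = t ^ α := by
      rw [← add_mul]; rw [add_comm] at hab; rw [hab, one_mul]
    linarith [h1, h2]

theorem stmt0 (lam : ℝ) (hlam : 0 < lam) (x : ℕ → ℝ) (hx : ∀ k, 0 ≤ x k)
    (hsum : Summable x) (hdom : ∀ n : ℕ, ∑' k : ℕ, x (n + 1 + k) ≤ lam * x n)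
    (α : ℝ) (hα0 : 0 < α) (hα1 : α ≤ 1) :
    Summable (fun k => x k ^ α) ∧
      ∑' k : ℕ, x k ^ α ≤ (1 / ((lam + 1) ^ α - lam ^ α)) * (∑' k : ℕ, x k) ^ α := by
  set R : ℕ → ℝ := fun n => ∑' k : ℕ, x (n + k) with hRdef
  have hRsummable : ∀ n, Summable fun k => x (n + k) := by
    intro n
    have := (summable_nat_add_iff (f := x) n).2 hsum
    simpa [add_comm] using this
  have hRnonneg : ∀ n, 0 ≤ R n := fun n => tsum_nonneg fun k => hx _
  have hRrec : ∀ n, R n = x n + R (n + 1) := by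
    intro n
    have h0 := Summable.tsum_eq_zero_add (hRsummable n)
    simp only [add_zero] at h0
    have : ∀ k, x (n + (k + 1)) = x (n + 1 + k) := by intro k; ring_nf
    rw [hRdef]
    simp only [h0, this]
  have hgap : 0 < (lam + 1) ^ α - lam ^ α := by
    have := Real.rpow_lt_rpow hlam.le (by linarith : lam < lam + 1) hα0
    linarith
  set c : ℝ := 1 / ((lam + 1) ^ α - lam ^ α) with hcdef
  have hc : 0 ≤ c := by positivity
  -- key per-index inequality
  have hkey : ∀ n, x n ^ α ≤ c * (R n ^ α - R (n + 1) ^ α) := by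
    intro n
    have hmaj := key_majorize α hα0 hα1 (hx n) (hRnonneg (n + 1)) (hdom n)
    have hxl : x n + lam * x n = (lam + 1) * x n := by ring
    rw [hxl, Real.mul_rpow (by linarith) (hx n), Real.mul_rpow hlam.le (hx n)] at hmaj
    have hRn : x n + R (n + 1) = R n := (hRrec n).symm
    rw [hRn] at hmaj
    rw [hcdef]
    rw [div_mul_eq_mul_div, one_mul, le_div_iff₀ hgap]
    nlinarith [hmaj]
  have hbound : ∀ N, ∑ n ∈ Finset.range N, x n ^ α ≤ c * R 0 ^ α := by
    intro N
    calc ∑ n ∈ Finset.range N, x n ^ α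
        ≤ ∑ n ∈ Finset.range N, c * (R n ^ α - R (n + 1) ^ α) :=
          Finset.sum_le_sum fun n _ => hkey n
      _ = c * (R 0 ^ α - R N ^ α) := by
          rw [← Finset.mul_sum, Finset.sum_range_sub']
      _ ≤ c * R 0 ^ α := by
          have : 0 ≤ R N ^ α := Real.rpow_nonneg (hRnonneg N) α
          nlinarith
  have hsummable : Summable fun k => x k ^ α :=
    summable_of_sum_range_le (fun n => Real.rpow_nonneg (hx n) α) hbound
  refine ⟨hsummable, ?_⟩
  have hR0 : R 0 = ∑' k : ℕ, x k := by
    rw [hRdef]; simp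
  have := Summable.tsum_le_of_sum_range_le hsummable hbound
  rw [hR0] at this
  linarith [this]
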